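/- Let a compact connected Lie group G act freely and smoothly on a manifold P with a principal G-bundle projection p: P → B, equipped with a principal connection. Suppose γ: P → P is a G-equivariant diffeomorphism of P that descends to a map fixing every point of a connected submanifold F ⊆ B pointwise (i.e. γ preserves each fiber over F up to the G-action). For each m ∈ p⁻¹(F) let g_m ∈ G be the unique group element with γ(m) = g_m · m. Then the conjugacy class of g_m in G is constant on p⁻¹(F); that is, for any m, n ∈ p⁻¹(F) there exists h ∈ G with g_n = h g_m h⁻¹. -/
import Mathlib


open unitInterval

/-- Constancy of the conjugacy class of `g_m` along the preimage of a connected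
component `F` of the fixed locus, for a `G`-equivariant map `γ` of a principal
`G`-bundle `p : P → B` with a connection (abstracted as a horizontal-lift
operation `Hlift`, which `γ` preserves over `F`). -/
theorem conjugacy_class_constant
    {G P B : Type*} [Group G] [MulAction G P]
    (hfree : ∀ (h : G) (m : P), h • m = m → h = 1)
    (p : P → B)
    (hpG : ∀ (h : G) (m : P), p (h • m) = p m)
    (hfib : ∀ m n : P, p m = p n → ∃ h : G, n = h • m)
    (γ : P → P) (hγ : ∀ (h : G) (m : P), γ (h • m) = h • γ m)
    (F : Set B)
    (g : P → G) (hg : ∀ m : P, p m ∈ F → γ m = g m • m)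
    (Hlift : (I → B) → P → (I → P))
    (hlift_proj : ∀ (η : I → B) (m : P), p m = η 0 → ∀ t, p (Hlift η m t) = η t)
    (hlift_init : ∀ (η : I → B) (m : P), p m = η 0 → Hlift η m 0 = m)
    (hlift_equiv : ∀ (η : I → B) (m : P) (h : G), p m = η 0 →
      Hlift η (h • m) = fun t => h • Hlift η m t)
    (hlift_γ : ∀ (η : I → B) (m : P), p m = η 0 → (∀ t, η t ∈ F) →
      (fun t => γ (Hlift η m t)) = Hlift η (γ m))
    (hconn : ∀ b ∈ F, ∀ b' ∈ F, ∃ η : I → B, (∀ t, η t ∈ F) ∧ η 0 = b ∧ η 1 = b')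
    (m n : P) (hm : p m ∈ F) (hn : p n ∈ F) :
    ∃ h : G, g n = h * g m * h⁻¹ := by
  obtain ⟨η, hηF, hη0, hη1⟩ := hconn (p m) hm (p n) hn
  have hpm : p m = η 0 := hη0.symm
  set m' := Hlift η m 1 with hm'def
  have hpm' : p m' = p n := by rw [hlift_proj η m hpm 1, hη1]
  have hm'F : p m' ∈ F := by rw [hpm']; exact hn
  obtain ⟨h, hh⟩ := hfib m' n hpm'
  -- γ m' = g m • m'
  have key : γ m' = g m • m' := by
    have h1 : (fun t => γ (Hlift η m t)) = Hlift η (γ m) := hlift_γ η m hpm hηF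
    have h2 : Hlift η (γ m) = fun t => g m • Hlift η m t := by
      rw [hg m hm]; exact hlift_equiv η m (g m) hpm
    have := congrFun (h1.trans h2) 1
    simpa [hm'def] using this
  -- g m' = g m
  have hgm' : g m' = g m := by
    have h1 : γ m' = g m' • m' := hg m' hm'F
    have h2 : ((g m)⁻¹ * g m') • m' = m' := by
      rw [mul_smul, ← h1, key, inv_smul_smul]
    have := hfree _ _ h2
    exact inv_mul_eq_one.mp this |>.symm
  use h
  -- γ n = g n • n and γ n = (h * g m) • m'
  have e1 : γ n = (g n * h) • m' := by
    rw [hg n hn, hh, mul_smul]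
  have e2 : γ n = (h * g m) • m' := by
    rw [hh, hγ, key, mul_smul]
  have : ((h * g m)⁻¹ * (g n * h)) • m' = m' := by
    rw [mul_smul, ← e1, e2, inv_smul_smul]
  have := hfree _ _ this
  have heq : h * g m = g n * h := inv_mul_eq_one.mp this
  exact eq_mul_inv_iff_mul_eq.mpr heq.symm
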